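/- arXiv:2507.07329 — 7 statements merged into one kernel-verified Lean document; each statement's English description precedes it below -/
import Mathlib

section
/- Let K be the complexification of a commutative fusion ring with character basis {μ_j}. A character μ_j is group-like (i.e. μ_j ⋆ μ_{j#} = μ_0, where μ_{j#}(x) := conj(μ_j(x)) on basis elements) if and only if |μ_j(x)| = FPdim(x) for every basis element x. -/
open scoped BigOperators

/-- A commutative fusion ring: nonnegative integer fusion coefficients on a basis
`x_0, ..., x_m` (`x_0` the unit), a duality involution, and Frobenius-Perron
dimensions `d i > 0`. -/
structure FusionData (m : ℕ) where
  N : Fin (m + 1) → Fin (m + 1) → Fin (m + 1) → ℕ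
  dual : Fin (m + 1) → Fin (m + 1)
  dual_invol : ∀ i, dual (dual i) = i
  N_comm : ∀ i j k, N i j k = N j i k
  N_assoc : ∀ i j l k, ∑ t, N i j t * N t l k = ∑ t, N j l t * N i t k
  N_one : ∀ j k, N 0 j k = if k = j then 1 else 0
  N_pair : ∀ i j, N i j 0 = if j = dual i then 1 else 0
  d : Fin (m + 1) → ℝ
  d_pos : ∀ i, 0 < d i
  d_one : d 0 = 1
  d_mul : ∀ i j, d i * d j = ∑ k, (N i j k : ℝ) * d k
  d_dual : ∀ i, d (dual i) = d i

/-- A character of the complexified fusion ring, given by its values on the basis. -/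
def IsChar {m : ℕ} (F : FusionData m) (μ : Fin (m + 1) → ℂ) : Prop :=
  μ 0 = 1 ∧
  (∀ i j, μ i * μ j = ∑ k, (F.N i j k : ℂ) * μ k) ∧
  (∀ i, μ (F.dual i) = starRingEnd ℂ (μ i)) ∧
  (∀ i, ‖μ i‖ ≤ F.d i)

/-- The dual `⋆` product: `(μ ⋆ ν)(x_k / d_k) = μ(x_k / d_k) · ν(x_k / d_k)`. -/
noncomputable def starProd {m : ℕ} (F : FusionData m) (μ ν : Fin (m + 1) → ℂ) :
    Fin (m + 1) → ℂ :=
  fun i => μ i * ν i / (F.d i : ℂ)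

/-- A group-like character: `μ ⋆ μ# = μ_0 = FPdim`, where `μ#` is the complex
conjugate character. -/
def IsGroupLike {m : ℕ} (F : FusionData m) (μ : Fin (m + 1) → ℂ) : Prop :=
  IsChar F μ ∧ ∀ i, starProd F μ (fun k => starRingEnd ℂ (μ k)) i = (F.d i : ℂ)

/-- The coefficient of the basis element `x_k` in the `n`-th power of `x_a`. -/
def powCoeff {m : ℕ} (F : FusionData m) (a : Fin (m + 1)) : ℕ → Fin (m + 1) → ℕ
  | 0, k => if k = 0 then 1 else 0
  | n + 1, k => ∑ l, powCoeff F a n l * F.N a l k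

/-- A character `μ_j` is group-like (`μ_j ⋆ μ_{j#} = μ_0`) iff
`|μ_j(x)| = FPdim(x)` for every basis element `x`. -/
theorem groupLike_iff_abs_eq_fpdim {m : ℕ} (F : FusionData m) (μ : Fin (m + 1) → ℂ)
    (h : IsChar F μ) :
    (∀ i, starProd F μ (fun k => starRingEnd ℂ (μ k)) i = (F.d i : ℂ)) ↔
      (∀ i, ‖μ i‖ = F.d i) := by
  have hd : ∀ i, (F.d i : ℂ) ≠ 0 := fun i =>
    Complex.ofReal_ne_zero.mpr (F.d_pos i).ne'
  constructor
  · intro H i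
    have hi := H i
    unfold starProd at hi
    rw [div_eq_iff (hd i), Complex.mul_conj] at hi
    have : Complex.normSq (μ i) = F.d i * F.d i := by
      exact_mod_cast hi
    have h2 : ‖μ i‖ ^ 2 = F.d i ^ 2 := by
      rw [Complex.sq_norm, this]; ring
    nlinarith [norm_nonneg (μ i), (F.d_pos i).le, h2]
  · intro H i
    unfold starProd
    rw [Complex.mul_conj, div_eq_iff (hd i)]
    have := H i
    have : Complex.normSq (μ i) = F.d i * F.d i := by
      rw [← Complex.sq_norm, this]; ring
    rw [this]; push_cast; ring
end

section
/- Let K be the complexification of a commutative fusion ring, and let G be the set of group-like characters (those μ with |μ(x)| = FPdim(x) for all basis elements x). Then G is a group under the ⋆ product, with identity μ_0 = FPdim, and inverse μ ↦ μ# given by complex conjugation. -/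
open scoped BigOperators

section Aux

variable {m : ℕ} (F : FusionData m)

lemma d_ne (i : Fin (m + 1)) : (F.d i : ℂ) ≠ 0 :=
  Complex.ofReal_ne_zero.mpr (F.d_pos i).ne'

lemma gl_abs {μ : Fin (m + 1) → ℂ} (h : IsGroupLike F μ) (i : Fin (m + 1)) :
    ‖μ i‖ = F.d i := by
  have h2 := h.2 i
  simp only [starProd] at h2
  rw [div_eq_iff (d_ne F i)] at h2
  rw [Complex.mul_conj] at h2
  have hn : Complex.normSq (μ i) = F.d i * F.d i := by exact_mod_cast h2
  rw [Complex.norm_def, hn, Real.sqrt_mul_self (F.d_pos i).le]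

lemma gl_of_abs {μ : Fin (m + 1) → ℂ} (h1 : IsChar F μ)
    (h2 : ∀ i, ‖μ i‖ = F.d i) : IsGroupLike F μ := by
  refine ⟨h1, fun i => ?_⟩
  simp only [starProd, Complex.mul_conj]
  rw [Complex.normSq_eq_norm_sq, h2 i]
  push_cast
  rw [sq, mul_div_assoc, div_self (d_ne F i), mul_one]

lemma re_eq_of_abs_le {w : ℂ} {r : ℝ} (hre : w.re = r) (habs : ‖w‖ ≤ r) :
    w = (r : ℂ) := by
  have h1 : w.re ≤ ‖w‖ := Complex.re_le_norm w
  have h2 : ‖w‖ ^ 2 = w.re * w.re + w.im * w.im := by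
    rw [Complex.sq_norm, Complex.normSq_apply]
  have him : w.im * w.im = 0 := by nlinarith [norm_nonneg w]
  have him0 : w.im = 0 := by
    have := mul_self_eq_zero.mp him; exact this
  apply Complex.ext
  · simp [hre]
  · simp [him0]

lemma gl_key {μ : Fin (m + 1) → ℂ} (h : IsGroupLike F μ) (i j k : Fin (m + 1))
    (hk : F.N i j k ≠ 0) :
    (F.d i : ℂ) * F.d j * μ k = μ i * μ j * F.d k := by
  set c := starRingEnd ℂ (μ i * μ j) with hc
  have habsμ : ∀ l, ‖μ l‖ = F.d l := gl_abs F h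
  have habsc : ‖c‖ = F.d i * F.d j := by
    rw [hc, map_mul, norm_mul]
    simp [habsμ]
  -- termwise inequality
  have hle : ∀ l ∈ Finset.univ, (F.N i j l : ℝ) * (c * μ l).re ≤
      (F.N i j l : ℝ) * (F.d i * F.d j * F.d l) := by
    intro l _
    apply mul_le_mul_of_nonneg_left _ (Nat.cast_nonneg _)
    calc (c * μ l).re ≤ ‖c * μ l‖ := Complex.re_le_norm _
      _ = (F.d i * F.d j) * F.d l := by rw [norm_mul, habsc, habsμ]
  -- sums are equal
  have hmulc : μ i * μ j * c = ((F.d i * F.d j : ℝ) : ℂ) ^ 2 := by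
    rw [hc, Complex.mul_conj, Complex.normSq_eq_norm_sq, norm_mul]
    simp [habsμ]
  have hsum : ∑ l, (F.N i j l : ℝ) * (F.d i * F.d j * F.d l) =
      ∑ l, (F.N i j l : ℝ) * (c * μ l).re := by
    have lhs : ∑ l, (F.N i j l : ℝ) * (F.d i * F.d j * F.d l) =
        (F.d i * F.d j) * (F.d i * F.d j) := by
      rw [F.d_mul i j, Finset.mul_sum]
      apply Finset.sum_congr rfl
      intro l _; ring
    have rhs : ∑ l, (F.N i j l : ℝ) * (c * μ l).re =
        (F.d i * F.d j) * (F.d i * F.d j) := by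
      have : ∑ l, (F.N i j l : ℝ) * (c * μ l).re =
          (c * ∑ l, (F.N i j l : ℂ) * μ l).re := by
        rw [Finset.mul_sum, Complex.re_sum]
        apply Finset.sum_congr rfl
        intro l _
        rw [show c * ((F.N i j l : ℂ) * μ l) = ((F.N i j l : ℝ) : ℂ) * (c * μ l) by
          push_cast; ring, Complex.re_ofReal_mul]
      rw [this, ← h.1.2.1 i j, mul_comm c, hmulc]
      have : (((F.d i * F.d j : ℝ) : ℂ) ^ 2).re = (F.d i * F.d j) ^ 2 := by
        rw [← Complex.ofReal_pow, Complex.ofReal_re]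
      rw [this]; ring
    rw [lhs, rhs]
  have heach := (Finset.sum_eq_sum_iff_of_le hle).mp hsum.symm k (Finset.mem_univ k)
  -- cancel N
  have hNpos : (0 : ℝ) < (F.N i j k : ℝ) := by
    exact_mod_cast Nat.pos_of_ne_zero hk
  have hre : (c * μ k).re = F.d i * F.d j * F.d k :=
    mul_left_cancel₀ hNpos.ne' heach
  have habsle : ‖c * μ k‖ ≤ F.d i * F.d j * F.d k := by
    rw [norm_mul, habsc, habsμ]
  have he1 : c * μ k = ((F.d i * F.d j * F.d k : ℝ) : ℂ) := re_eq_of_abs_le hre habsle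
  apply mul_left_cancel₀ (mul_ne_zero (d_ne F i) (d_ne F j))
  push_cast at he1 hmulc ⊢
  linear_combination μ i * μ j * he1 - μ k * hmulc

lemma star_mult {μ ν : Fin (m + 1) → ℂ} (hμ : IsGroupLike F μ) (hν : IsGroupLike F ν)
    (i j : Fin (m + 1)) :
    starProd F μ ν i * starProd F μ ν j = ∑ k, (F.N i j k : ℂ) * starProd F μ ν k := by
  simp only [starProd]
  have hsum : ∑ k, (F.N i j k : ℂ) * (μ k * ν k / F.d k) =
      ∑ k, (F.N i j k : ℂ) * F.d k *
        (μ i * μ j * (ν i * ν j) / (((F.d i : ℂ) * F.d j) ^ 2)) := by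
    apply Finset.sum_congr rfl
    intro k _
    by_cases hk : F.N i j k = 0
    · simp [hk]
    · have h1 := gl_key F hμ i j k hk
      have h2 := gl_key F hν i j k hk
      have hdk := d_ne F k
      have hdi := d_ne F i
      have hdj := d_ne F j
      have e1 : μ k = μ i * μ j * F.d k / ((F.d i : ℂ) * F.d j) := by
        field_simp
        linear_combination h1
      have e2 : ν k = ν i * ν j * F.d k / ((F.d i : ℂ) * F.d j) := by
        field_simp
        linear_combination h2
      rw [e1, e2]
      field_simp
  rw [hsum, ← Finset.sum_mul]
  have hNd : ∑ k, (F.N i j k : ℂ) * F.d k = (F.d i : ℂ) * F.d j := by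
    have := F.d_mul i j
    exact_mod_cast congrArg (Complex.ofReal) this.symm
  rw [hNd]
  have hdi := d_ne F i
  have hdj := d_ne F j
  field_simp

lemma star_char {μ ν : Fin (m + 1) → ℂ} (hμ : IsGroupLike F μ) (hν : IsGroupLike F ν) :
    IsChar F (starProd F μ ν) := by
  refine ⟨?_, star_mult F hμ hν, ?_, ?_⟩
  · simp [starProd, hμ.1.1, hν.1.1, F.d_one]
  · intro i
    simp only [starProd, hμ.1.2.2.1 i, hν.1.2.2.1 i, F.d_dual]
    rw [map_div₀, map_mul, Complex.conj_ofReal]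
  · intro i
    simp only [starProd]
    rw [norm_div, norm_mul, Complex.norm_of_nonneg (F.d_pos i).le,
      gl_abs F hμ, gl_abs F hν]
    rw [mul_div_assoc, div_self (F.d_pos i).ne', mul_one]

lemma star_abs {μ ν : Fin (m + 1) → ℂ} (hμ : IsGroupLike F μ) (hν : IsGroupLike F ν)
    (i : Fin (m + 1)) : ‖starProd F μ ν i‖ = F.d i := by
  simp only [starProd]
  rw [norm_div, norm_mul, Complex.norm_of_nonneg (F.d_pos i).le,
    gl_abs F hμ, gl_abs F hν, mul_div_assoc, div_self (F.d_pos i).ne', mul_one]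

lemma d_groupLike : IsGroupLike F (fun i => (F.d i : ℂ)) := by
  apply gl_of_abs
  · refine ⟨?_, ?_, ?_, ?_⟩
    · simp [F.d_one]
    · intro i j
      have := F.d_mul i j
      push_cast
      exact_mod_cast congrArg Complex.ofReal this
    · intro i
      simp [F.d_dual, Complex.conj_ofReal]
    · intro i
      simp [Complex.norm_real, abs_of_pos (F.d_pos i), le_refl]
  · intro i
    simp [Complex.norm_real, abs_of_pos (F.d_pos i)]

lemma conj_groupLike {μ : Fin (m + 1) → ℂ} (hμ : IsGroupLike F μ) :
    IsGroupLike F (fun k => starRingEnd ℂ (μ k)) := by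
  apply gl_of_abs
  · refine ⟨?_, ?_, ?_, ?_⟩
    · simp [hμ.1.1]
    · intro i j
      have := hμ.1.2.1 i j
      have : starRingEnd ℂ (μ i * μ j) = starRingEnd ℂ (∑ k, (F.N i j k : ℂ) * μ k) :=
        congrArg _ this
      rw [map_mul, map_sum] at this
      simpa [map_mul, Complex.conj_natCast] using this
    · intro i
      simp [hμ.1.2.2.1 i]
    · intro i
      simpa using hμ.1.2.2.2 i
  · intro i
    simpa using gl_abs F hμ i

end Aux

/-- The group-like characters form a group under the `⋆` product, with
identity `μ_0 = FPdim` and inverse given by complex conjugation. -/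
theorem groupLike_characters_form_group {m : ℕ} (F : FusionData m) :
    IsGroupLike F (fun i => (F.d i : ℂ)) ∧
    (∀ μ ν, IsGroupLike F μ → IsGroupLike F ν → IsGroupLike F (starProd F μ ν)) ∧
    (∀ μ, IsGroupLike F μ →
      starProd F (fun i => (F.d i : ℂ)) μ = μ ∧ starProd F μ (fun i => (F.d i : ℂ)) = μ) ∧
    (∀ μ, IsGroupLike F μ → IsGroupLike F (fun k => starRingEnd ℂ (μ k)) ∧
      starProd F μ (fun k => starRingEnd ℂ (μ k)) = (fun i => (F.d i : ℂ)) ∧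
      starProd F (fun k => starRingEnd ℂ (μ k)) μ = (fun i => (F.d i : ℂ))) ∧
    (∀ μ ν ρ, IsGroupLike F μ → IsGroupLike F ν → IsGroupLike F ρ →
      starProd F (starProd F μ ν) ρ = starProd F μ (starProd F ν ρ)) := by
  have hid := d_groupLike F
  refine ⟨hid, ?_, ?_, ?_, ?_⟩
  · intro μ ν hμ hν
    exact gl_of_abs F (star_char F hμ hν) (star_abs F hμ hν)
  · intro μ hμ
    constructor
    · funext i
      simp only [starProd]
      rw [mul_comm, mul_div_assoc, div_self (d_ne F i), mul_one]
    · funext i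
      simp only [starProd]
      rw [mul_div_assoc, div_self (d_ne F i), mul_one]
  · intro μ hμ
    refine ⟨conj_groupLike F hμ, ?_, ?_⟩
    · funext i
      exact hμ.2 i
    · funext i
      simp only [starProd]
      rw [mul_comm]
      exact hμ.2 i
  · intro μ ν ρ _ _ _
    funext i
    simp only [starProd]
    field_simp
end

section
/- Let μ be a character of a commutative fusion ring and suppose |μ(x)| = FPdim(x) for a basis element x. Then for every basis element y appearing as a constituent of some tensor power x^{⊗m}, one has |μ(y)| = FPdim(y). Consequently, if x generates the whole fusion ring (every basis element appears in some power of x), then μ is group-like. -/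
open scoped BigOperators

lemma char_pow {m : ℕ} (F : FusionData m) (μ : Fin (m + 1) → ℂ) (h : IsChar F μ)
    (a : Fin (m + 1)) : ∀ n, μ a ^ n = ∑ k, (powCoeff F a n k : ℂ) * μ k := by
  intro n
  induction n with
  | zero =>
      simp [powCoeff, h.1]
  | succ n ih =>
      calc μ a ^ (n + 1) = μ a * μ a ^ n := by ring
        _ = μ a * ∑ l, (powCoeff F a n l : ℂ) * μ l := by rw [ih]
        _ = ∑ l, (powCoeff F a n l : ℂ) * (μ a * μ l) := by
              rw [Finset.mul_sum]; congr 1; ext l; ring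
        _ = ∑ l, (powCoeff F a n l : ℂ) * ∑ k, (F.N a l k : ℂ) * μ k := by
              congr 1; ext l; rw [h.2.1 a l]
        _ = ∑ k, (powCoeff F a (n + 1) k : ℂ) * μ k := by
              simp only [Finset.mul_sum, powCoeff, Nat.cast_sum, Nat.cast_mul,
                Finset.sum_mul]
              rw [Finset.sum_comm]
              exact Finset.sum_congr rfl fun k _ => Finset.sum_congr rfl fun l _ => by ring

lemma d_pow {m : ℕ} (F : FusionData m)
    (a : Fin (m + 1)) : ∀ n, F.d a ^ n = ∑ k, (powCoeff F a n k : ℝ) * F.d k := by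
  intro n
  induction n with
  | zero =>
      simp [powCoeff, F.d_one]
  | succ n ih =>
      calc F.d a ^ (n + 1) = F.d a * F.d a ^ n := by ring
        _ = F.d a * ∑ l, (powCoeff F a n l : ℝ) * F.d l := by rw [ih]
        _ = ∑ l, (powCoeff F a n l : ℝ) * (F.d a * F.d l) := by
              rw [Finset.mul_sum]; congr 1; ext l; ring
        _ = ∑ l, (powCoeff F a n l : ℝ) * ∑ k, (F.N a l k : ℝ) * F.d k := by
              congr 1; ext l; rw [F.d_mul a l]
        _ = ∑ k, (powCoeff F a (n + 1) k : ℝ) * F.d k := by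
              simp only [Finset.mul_sum, powCoeff, Nat.cast_sum, Nat.cast_mul,
                Finset.sum_mul]
              rw [Finset.sum_comm]
              exact Finset.sum_congr rfl fun k _ => Finset.sum_congr rfl fun l _ => by ring

/-- If `|μ(x)| = FPdim(x)` then `|μ(y)| = FPdim(y)` for every constituent `y`
of a tensor power of `x`; consequently if `x` generates the fusion ring, `μ`
is group-like. -/
theorem abs_eq_fpdim_propagates {m : ℕ} (F : FusionData m)
    (μ : Fin (m + 1) → ℂ) (h : IsChar F μ)
    (a : Fin (m + 1)) (ha : ‖μ a‖ = F.d a) :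
    (∀ n k, powCoeff F a n k ≠ 0 → ‖μ k‖ = F.d k) ∧
    ((∀ k, ∃ n, powCoeff F a n k ≠ 0) → ∀ k, ‖μ k‖ = F.d k) := by
  have key : ∀ n k, powCoeff F a n k ≠ 0 → ‖μ k‖ = F.d k := by
    intro n k hk
    have h1 : ‖μ a ^ n‖ = F.d a ^ n := by
      rw [norm_pow, ha]
    have h2 : F.d a ^ n = ∑ j, (powCoeff F a n j : ℝ) * F.d j := d_pow F a n
    have h3 : ‖μ a ^ n‖ ≤ ∑ j, (powCoeff F a n j : ℝ) * ‖μ j‖ := by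
      rw [char_pow F μ h a n]
      refine le_trans (norm_sum_le _ _) ?_
      refine Finset.sum_le_sum fun j _ => ?_
      rw [norm_mul, Complex.norm_natCast]
    have h4 : ∑ j, (powCoeff F a n j : ℝ) * ‖μ j‖
        ≤ ∑ j, (powCoeff F a n j : ℝ) * F.d j := by
      refine Finset.sum_le_sum fun j _ => ?_
      exact mul_le_mul_of_nonneg_left (h.2.2.2 j) (Nat.cast_nonneg _)
    have heq : ∑ j, (powCoeff F a n j : ℝ) * ‖μ j‖
        = ∑ j, (powCoeff F a n j : ℝ) * F.d j := by
      refine le_antisymm h4 ?_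
      rw [← h2, ← h1]; exact h3
    have hterm := (Finset.sum_eq_sum_iff_of_le
      (fun j _ => mul_le_mul_of_nonneg_left (h.2.2.2 j) (Nat.cast_nonneg _))).mp heq
    have := hterm k (Finset.mem_univ k)
    have hc : (0 : ℝ) < (powCoeff F a n k : ℝ) := by
      exact_mod_cast Nat.pos_of_ne_zero hk
    exact mul_left_cancel₀ (ne_of_gt hc) this
  exact ⟨key, fun hgen k => (hgen k).elim fun n hn => key n k hn⟩
end

section
/- Let K be the complexification of a commutative fusion ring generated by a single simple basis element x (every basis element is a constituent of some power of x). Then Z(x) := {characters μ : |μ(x)| = FPdim(x)} equals the group G of group-like characters. -/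
open scoped BigOperators

lemma char_pow_aux {m : ℕ} (F : FusionData m) {R : Type*} [CommRing R]
    (f : Fin (m + 1) → R) (h0 : f 0 = 1)
    (hmul : ∀ i j, f i * f j = ∑ k, (F.N i j k : R) * f k)
    (a : Fin (m + 1)) : ∀ n, f a ^ n = ∑ k, (powCoeff F a n k : R) * f k := by
  intro n
  induction n with
  | zero =>
    simp only [pow_zero, powCoeff]
    rw [Finset.sum_congr rfl (fun k _ => by
      rw [show ((if k = 0 then 1 else 0 : ℕ) : R) = if k = 0 then 1 else 0 by
        split <;> simp])]
    simp [h0]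
  | succ n ih =>
    have h2 : ∀ l, ((powCoeff F a n l : R) * f l) * f a
        = ∑ k, ((powCoeff F a n l : R) * (F.N a l k : R)) * f k := by
      intro l
      rw [mul_assoc, hmul l a, Finset.mul_sum]
      refine Finset.sum_congr rfl fun k _ => ?_
      rw [F.N_comm l a k]; ring
    rw [pow_succ, ih, Finset.sum_mul,
      Finset.sum_congr rfl (fun l _ => h2 l), Finset.sum_comm]
    refine Finset.sum_congr rfl fun k _ => ?_
    rw [← Finset.sum_mul]
    congr 1
    show _ = ((∑ l, powCoeff F a n l * F.N a l k : ℕ) : R)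
    push_cast
    rfl

lemma d_pow_aux {m : ℕ} (F : FusionData m) (a : Fin (m + 1)) (n : ℕ) :
    F.d a ^ n = ∑ k, (powCoeff F a n k : ℝ) * F.d k :=
  char_pow_aux F F.d F.d_one F.d_mul a n

/-- If the fusion ring is generated by the simple basis element `x = x_a`, then
the center `Z(x) = {μ : |μ(x)| = FPdim(x)}` equals the group of group-like
characters. -/
theorem center_of_generator_eq_groupLikes {m : ℕ} (F : FusionData m)
    (a : Fin (m + 1)) (hgen : ∀ k, ∃ n, powCoeff F a n k ≠ 0) :
    {μ : Fin (m + 1) → ℂ | IsChar F μ ∧ ‖μ a‖ = F.d a} =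
      {μ : Fin (m + 1) → ℂ | IsGroupLike F μ} := by
  ext μ
  simp only [Set.mem_setOf_eq]
  constructor
  · rintro ⟨hchar, habs⟩
    refine ⟨hchar, ?_⟩
    obtain ⟨h0, hmul, hdual, hle⟩ := hchar
    have key : ∀ k, ‖μ k‖ = F.d k := by
      intro k
      obtain ⟨n, hn⟩ := hgen k
      have hpow := char_pow_aux F μ h0 hmul a n
      have hdpow := d_pow_aux F a n
      have h1 : F.d a ^ n ≤ ∑ j, (powCoeff F a n j : ℝ) * ‖μ j‖ := by
        calc F.d a ^ n = ‖μ a ^ n‖ := by rw [norm_pow, habs]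
          _ = ‖∑ j, (powCoeff F a n j : ℂ) * μ j‖ := by rw [hpow]
          _ ≤ ∑ j, ‖(powCoeff F a n j : ℂ) * μ j‖ :=
              norm_sum_le _ _
          _ = ∑ j, (powCoeff F a n j : ℝ) * ‖μ j‖ := by
              refine Finset.sum_congr rfl fun j _ => ?_
              rw [norm_mul, Complex.norm_natCast]
      have hsum0 : ∑ j, (powCoeff F a n j : ℝ) * (F.d j - ‖μ j‖) = 0 := by
        have heq : ∑ j, (powCoeff F a n j : ℝ) * (F.d j - ‖μ j‖)
            = (∑ j, (powCoeff F a n j : ℝ) * F.d j)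
              - ∑ j, (powCoeff F a n j : ℝ) * ‖μ j‖ := by
          rw [← Finset.sum_sub_distrib]
          exact Finset.sum_congr rfl fun j _ => by ring
        have hge : (0:ℝ) ≤ ∑ j, (powCoeff F a n j : ℝ) * (F.d j - ‖μ j‖) :=
          Finset.sum_nonneg fun j _ => mul_nonneg (Nat.cast_nonneg _)
            (sub_nonneg.mpr (hle j))
        have hle' : ∑ j, (powCoeff F a n j : ℝ) * (F.d j - ‖μ j‖) ≤ 0 := by
          rw [heq, ← hdpow]; linarith
        linarith
      have hk : (powCoeff F a n k : ℝ) * (F.d k - ‖μ k‖) = 0 :=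
        (Finset.sum_eq_zero_iff_of_nonneg (fun j _ => mul_nonneg (Nat.cast_nonneg _)
          (sub_nonneg.mpr (hle j)))).mp hsum0 k (Finset.mem_univ k)
      have hc : (powCoeff F a n k : ℝ) ≠ 0 := Nat.cast_ne_zero.mpr hn
      have := (mul_eq_zero.mp hk).resolve_left hc
      linarith
    intro i
    have hd : (F.d i : ℂ) ≠ 0 := by
      exact_mod_cast (F.d_pos i).ne'
    unfold starProd
    rw [Complex.mul_conj]
    rw [div_eq_iff hd]
    rw [← Complex.sq_norm, key i]
    push_cast
    ring
  · rintro ⟨hchar, hgl⟩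
    refine ⟨hchar, ?_⟩
    have hd : (F.d a : ℂ) ≠ 0 := by exact_mod_cast (F.d_pos a).ne'
    have h := hgl a
    unfold starProd at h
    rw [div_eq_iff hd, Complex.mul_conj, ← Complex.sq_norm] at h
    have h2 : (‖μ a‖) ^ 2 = F.d a ^ 2 := by
      have h' : ((‖μ a‖ ^ 2 : ℝ) : ℂ) = ((F.d a ^ 2 : ℝ) : ℂ) := by
        rw [h]; push_cast; ring
      exact_mod_cast h'
    nlinarith [norm_nonneg (μ a), F.d_pos a]
end

section
/- Let K be the complexification of a commutative fusion ring generated by a simple basis element x. If a character μ_z is group-like and μ_z(x)/FPdim(x) = 1 (equivalently ω_x(μ_z) = 1), then μ_z = FPdim. In particular, the central character ω_x restricted to the group of group-like characters is injective (faithful). -/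
open scoped BigOperators

private lemma re_eq_abs_imp' {z : ℂ} (h : z.re = ‖z‖) : z = (‖z‖ : ℝ) := by
  have him : z.im = 0 := by
    have h2 : ‖z‖ ^ 2 = z.re ^ 2 + z.im ^ 2 := by
      rw [Complex.sq_norm, Complex.normSq_apply]; ring
    rw [← h] at h2
    have : z.im ^ 2 = 0 := by linarith
    exact pow_eq_zero_iff (n := 2) (by norm_num) |>.mp this
  exact Complex.ext (by simpa using h) (by simpa using him)

/-- Group-like characters have `|μ i| = d i`. -/
private lemma groupLike_abs {m : ℕ} (F : FusionData m) {μ : Fin (m + 1) → ℂ}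
    (h : IsGroupLike F μ) (i : Fin (m + 1)) : ‖μ i‖ = F.d i := by
  have h2 := h.2 i
  simp only [starProd] at h2
  have hd : (F.d i : ℂ) ≠ 0 := Complex.ofReal_ne_zero.mpr (F.d_pos i).ne'
  have hsq : μ i * starRingEnd ℂ (μ i) = (F.d i : ℂ) * (F.d i : ℂ) := by
    field_simp at h2
    linear_combination h2
  have hc : ((‖μ i‖ ^ 2 : ℝ) : ℂ) = ((F.d i ^ 2 : ℝ) : ℂ) := by
    rw [Complex.sq_norm]
    push_cast
    rw [← Complex.mul_conj]
    linear_combination hsq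
  have hr : ‖μ i‖ ^ 2 = F.d i ^ 2 := by exact_mod_cast hc
  have := F.d_pos i
  nlinarith [norm_nonneg (μ i)]

/-- Alignment: at a nonzero fusion coefficient, phases multiply. -/
private lemma align {m : ℕ} (F : FusionData m) {μ : Fin (m + 1) → ℂ}
    (hc : IsChar F μ) (habs : ∀ i, ‖μ i‖ = F.d i)
    (i j k : Fin (m + 1)) (hN : F.N i j k ≠ 0) :
    μ k * ((F.d i : ℂ) * (F.d j : ℂ)) = μ i * μ j * (F.d k : ℂ) := by
  set u : ℂ := starRingEnd ℂ (μ i * μ j) with hu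
  have habsu : ‖u‖ = F.d i * F.d j := by
    rw [hu, Complex.norm_conj, norm_mul, habs i, habs j]
  have hsum : μ i * μ j = ∑ t, (F.N i j t : ℂ) * μ t := hc.2.1 i j
  have h1 : (u * (μ i * μ j)).re = (F.d i * F.d j) ^ 2 := by
    rw [hu, mul_comm, Complex.mul_conj, Complex.ofReal_re, ← Complex.sq_norm,
      norm_mul, habs i, habs j]
  have h2 : (u * (μ i * μ j)).re = ∑ t, (F.N i j t : ℝ) * (u * μ t).re := by
    rw [hsum, Finset.mul_sum, Complex.re_sum]
    refine Finset.sum_congr rfl fun t _ => ?_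
    have : u * ((F.N i j t : ℂ) * μ t) = ((F.N i j t : ℝ) : ℂ) * (u * μ t) := by
      push_cast; ring
    rw [this, Complex.re_ofReal_mul]
  have hbound : ∀ t ∈ Finset.univ, (F.N i j t : ℝ) * (u * μ t).re ≤
      (F.N i j t : ℝ) * (F.d i * F.d j * F.d t) := by
    intro t _
    refine mul_le_mul_of_nonneg_left ?_ (Nat.cast_nonneg _)
    calc (u * μ t).re ≤ ‖u * μ t‖ := Complex.re_le_norm _
      _ = F.d i * F.d j * F.d t := by rw [norm_mul, habsu, habs t]
  have htot : ∑ t, (F.N i j t : ℝ) * (F.d i * F.d j * F.d t) = (F.d i * F.d j) ^ 2 := by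
    have := F.d_mul i j
    calc ∑ t, (F.N i j t : ℝ) * (F.d i * F.d j * F.d t)
        = (F.d i * F.d j) * ∑ t, (F.N i j t : ℝ) * F.d t := by
          rw [Finset.mul_sum]; exact Finset.sum_congr rfl fun t _ => by ring
      _ = (F.d i * F.d j) ^ 2 := by rw [← this]; ring
  have heq : ∀ t ∈ Finset.univ,
      (F.N i j t : ℝ) * (u * μ t).re = (F.N i j t : ℝ) * (F.d i * F.d j * F.d t) :=
    (Finset.sum_eq_sum_iff_of_le hbound).mp (by rw [← h2, h1, htot])
  have hk : (u * μ k).re = F.d i * F.d j * F.d k := by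
    have := heq k (Finset.mem_univ k)
    have hN' : (0:ℝ) < (F.N i j k : ℝ) := by exact_mod_cast Nat.pos_of_ne_zero hN
    exact mul_left_cancel₀ hN'.ne' this
  have habsk : ‖u * μ k‖ = F.d i * F.d j * F.d k := by
    rw [norm_mul, habsu, habs k]
  have hzk : u * μ k = ((F.d i * F.d j * F.d k : ℝ) : ℂ) := by
    have := re_eq_abs_imp' (z := u * μ k) (by rw [hk, habsk])
    rwa [habsk] at this
  -- multiply by μ i * μ j and cancel d i * d j
  have hmc : (μ i * μ j) * u = ((F.d i * F.d j) ^ 2 : ℝ) := by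
    rw [hu, Complex.mul_conj, ← Complex.sq_norm, norm_mul, habs i, habs j]
  have hd : ((F.d i * F.d j : ℝ) : ℂ) ≠ 0 :=
    Complex.ofReal_ne_zero.mpr (mul_pos (F.d_pos i) (F.d_pos j)).ne'
  apply mul_left_cancel₀ hd
  push_cast at hzk hmc ⊢
  linear_combination (μ i * μ j) * hzk - μ k * hmc

/-- Powers of a generator propagate the phase. -/
private lemma pow_key {m : ℕ} (F : FusionData m) {μ : Fin (m + 1) → ℂ}
    (hc : IsChar F μ) (habs : ∀ i, ‖μ i‖ = F.d i) (a : Fin (m + 1)) :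
    ∀ n k, powCoeff F a n k ≠ 0 → μ k * ((F.d a : ℂ)) ^ n = (μ a) ^ n * (F.d k : ℂ) := by
  intro n
  induction n with
  | zero =>
    intro k hk
    simp only [powCoeff] at hk
    have hk0 : k = 0 := by by_contra h; simp [h] at hk
    subst hk0
    simp [hc.1, F.d_one]
  | succ n ih =>
    intro k hk
    simp only [powCoeff] at hk
    obtain ⟨l, -, hl⟩ := Finset.exists_ne_zero_of_sum_ne_zero hk
    obtain ⟨hl1, hl2⟩ := mul_ne_zero_iff.mp hl
    have h1 := ih l hl1
    have h2 := align F hc habs a l k hl2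
    have hdl : (F.d l : ℂ) ≠ 0 := Complex.ofReal_ne_zero.mpr (F.d_pos l).ne'
    apply mul_right_cancel₀ hdl
    calc μ k * (F.d a : ℂ) ^ (n + 1) * (F.d l : ℂ)
        = (μ k * ((F.d a : ℂ) * (F.d l : ℂ))) * (F.d a : ℂ) ^ n := by ring
      _ = (μ a * μ l * (F.d k : ℂ)) * (F.d a : ℂ) ^ n := by rw [h2]
      _ = (μ a * (F.d k : ℂ)) * (μ l * (F.d a : ℂ) ^ n) := by ring
      _ = (μ a * (F.d k : ℂ)) * ((μ a) ^ n * (F.d l : ℂ)) := by rw [h1]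
      _ = (μ a) ^ (n + 1) * (F.d k : ℂ) * (F.d l : ℂ) := by ring


/-- If the fusion ring is generated by the simple basis element `x_a` and a
group-like character `μ_z` satisfies `ω_x(μ_z) = μ_z(x)/FPdim(x) = 1`, then
`μ_z = FPdim`; in particular the central character `ω_x` is injective
(faithful) on the group of group-like characters. -/
theorem central_character_faithful {m : ℕ} (F : FusionData m)
    (a : Fin (m + 1)) (hgen : ∀ k, ∃ n, powCoeff F a n k ≠ 0) :
    (∀ μ, IsGroupLike F μ → μ a / (F.d a : ℂ) = 1 → μ = fun i => (F.d i : ℂ)) ∧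
    (∀ μ ν, IsGroupLike F μ → IsGroupLike F ν →
      μ a / (F.d a : ℂ) = ν a / (F.d a : ℂ) → μ = ν) := by
  have main : ∀ μ, IsGroupLike F μ → ∀ i, μ i * ((F.d a : ℂ)) ^ (hgen i).choose
      = (μ a) ^ (hgen i).choose * (F.d i : ℂ) := fun μ hμ i =>
    pow_key F hμ.1 (groupLike_abs F hμ) a _ i (hgen i).choose_spec
  have hda : (F.d a : ℂ) ≠ 0 := Complex.ofReal_ne_zero.mpr (F.d_pos a).ne'
  constructor
  · intro μ hμ hω
    have hμa : μ a = (F.d a : ℂ) := by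
      field_simp at hω; exact hω
    funext i
    have h := main μ hμ i
    rw [hμa] at h
    exact mul_right_cancel₀ (pow_ne_zero _ hda) (by linear_combination h)
  · intro μ ν hμ hν hω
    have hμν : μ a = ν a := by
      field_simp at hω; exact hω
    funext i
    have h1 := main μ hμ i
    have h2 := main ν hν i
    rw [hμν] at h1
    exact mul_right_cancel₀ (pow_ne_zero _ hda) (h1.trans h2.symm)
end

section
/- Let K be the complexification of a commutative fusion ring generated by a simple basis element x, and let G be the group of group-like characters acting on all characters by ⋆-multiplication. Call a character μ non-vanishing if μ(x) ≠ 0. Then the G-action is free on each orbit consisting of non-vanishing characters; in particular each non-vanishing orbit has cardinality |G|. -/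
open scoped BigOperators

lemma re_eq_abs_imp {u : ℂ} (h : u.re = ‖u‖) : u = (u.re : ℂ) := by
  have h1 := Complex.sq_norm u
  rw [Complex.normSq_apply, ← h] at h1
  have him : u.im = 0 := by nlinarith [sq_nonneg u.im]
  exact Complex.ext rfl him

lemma grouplike_key {m : ℕ} (F : FusionData m) (z : Fin (m + 1) → ℂ)
    (hz : IsGroupLike F z) {i j k : Fin (m + 1)} (hN : F.N i j k ≠ 0) :
    z k * ((F.d i : ℂ) * F.d j) = z i * z j * (F.d k : ℂ) := by
  obtain ⟨⟨hz0, hzmul, hzdual, hzabs⟩, hzg⟩ := hz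
  have hdC : ∀ t, (F.d t : ℂ) ≠ 0 := fun t => Complex.ofReal_ne_zero.mpr (F.d_pos t).ne'
  have hnormSq : ∀ t, Complex.normSq (z t) = F.d t * F.d t := by
    intro t
    have h := hzg t
    simp only [starProd, div_eq_iff (hdC t)] at h
    rw [Complex.mul_conj] at h
    exact_mod_cast h
  have habs : ∀ t, ‖z t‖ = F.d t := by
    intro t
    have h1 : ‖z t‖ ^ 2 = F.d t ^ 2 := by
      rw [Complex.sq_norm, hnormSq t]; ring
    nlinarith [norm_nonneg (z t), F.d_pos t]
  set w : ℂ := starRingEnd ℂ (z i * z j) with hw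
  have habsw : ‖w‖ = F.d i * F.d j := by
    rw [hw, Complex.norm_conj, norm_mul, habs, habs]
  have hwz : w * (z i * z j) = ((F.d i * F.d j) * (F.d i * F.d j) : ℝ) := by
    rw [hw, mul_comm, Complex.mul_conj, Complex.normSq_mul, hnormSq, hnormSq]
    push_cast; ring
  have hsumC : ∑ t, (F.N i j t : ℂ) * (w * z t) = w * (z i * z j) := by
    rw [hzmul i j, Finset.mul_sum]
    exact Finset.sum_congr rfl (fun t _ => by ring)
  have hre : ∑ t, (F.N i j t : ℝ) * (w * z t).re = (F.d i * F.d j) * (F.d i * F.d j) := by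
    have := congrArg Complex.re (hsumC.trans hwz)
    simpa [Complex.re_sum, Complex.mul_re, Complex.natCast_re, Complex.natCast_im,
      Complex.ofReal_re] using this
  have hterm_le : ∀ t, (w * z t).re ≤ F.d i * F.d j * F.d t := by
    intro t
    calc (w * z t).re ≤ ‖w * z t‖ := Complex.re_le_norm _
    _ = F.d i * F.d j * F.d t := by rw [norm_mul, habsw, habs]
  have hsum0 : ∑ t, (F.N i j t : ℝ) * (F.d i * F.d j * F.d t - (w * z t).re) = 0 := by
    have hd2 := F.d_mul i j
    simp only [mul_sub]
    rw [Finset.sum_sub_distrib, hre]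
    have : ∑ t, (F.N i j t : ℝ) * (F.d i * F.d j * F.d t)
        = (F.d i * F.d j) * ∑ t, (F.N i j t : ℝ) * F.d t := by
      rw [Finset.mul_sum]; exact Finset.sum_congr rfl (fun t _ => by ring)
    rw [this, ← hd2]; ring
  have hknn : ∀ t ∈ Finset.univ, 0 ≤ (F.N i j t : ℝ) * (F.d i * F.d j * F.d t - (w * z t).re) :=
    fun t _ => mul_nonneg (Nat.cast_nonneg _) (by linarith [hterm_le t])
  have heach := (Finset.sum_eq_zero_iff_of_nonneg hknn).mp hsum0 k (Finset.mem_univ k)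
  have hNk : (F.N i j k : ℝ) ≠ 0 := Nat.cast_ne_zero.mpr hN
  have hre_eq : (w * z k).re = F.d i * F.d j * F.d k := by
    rcases mul_eq_zero.mp heach with h | h
    · exact absurd h hNk
    · linarith
  have hwzk : w * z k = ((F.d i * F.d j * F.d k : ℝ) : ℂ) := by
    have := re_eq_abs_imp (u := w * z k) (by rw [hre_eq, norm_mul, habsw, habs])
    rw [this, hre_eq]
  have final : ((F.d i * F.d j : ℝ) : ℂ) * ((F.d i * F.d j : ℝ) : ℂ) * z k
      = z i * z j * ((F.d i * F.d j * F.d k : ℝ) : ℂ) := by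
    calc ((F.d i * F.d j : ℝ) : ℂ) * ((F.d i * F.d j : ℝ) : ℂ) * z k
        = (w * (z i * z j)) * z k := by rw [hwz]; push_cast; ring
      _ = (z i * z j) * (w * z k) := by ring
      _ = z i * z j * ((F.d i * F.d j * F.d k : ℝ) : ℂ) := by rw [hwzk]
  have hcancel : (z k * ((F.d i : ℂ) * F.d j)) * ((F.d i : ℂ) * F.d j)
      = (z i * z j * (F.d k : ℂ)) * ((F.d i : ℂ) * F.d j) := by
    push_cast at final; linear_combination final
  exact mul_right_cancel₀ (mul_ne_zero (hdC i) (hdC j)) hcancel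

lemma grouplike_propagate {m : ℕ} (F : FusionData m) (a : Fin (m + 1))
    (hgen : ∀ k, ∃ n, powCoeff F a n k ≠ 0)
    (z₁ z₂ : Fin (m + 1) → ℂ) (h₁ : IsGroupLike F z₁) (h₂ : IsGroupLike F z₂)
    (hab : z₁ a = z₂ a) : z₁ = z₂ := by
  have hdC : ∀ t, (F.d t : ℂ) ≠ 0 := fun t => Complex.ofReal_ne_zero.mpr (F.d_pos t).ne'
  have key : ∀ n k, powCoeff F a n k ≠ 0 → z₁ k = z₂ k := by
    intro n
    induction n with
    | zero =>
      intro k hk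
      simp only [powCoeff] at hk
      have hk0 : k = 0 := by by_contra h; simp [h] at hk
      rw [hk0, h₁.1.1, h₂.1.1]
    | succ n ih =>
      intro k hk
      simp only [powCoeff] at hk
      obtain ⟨l, -, hl⟩ := Finset.exists_ne_zero_of_sum_ne_zero hk
      obtain ⟨hl1, hl2⟩ := Nat.mul_ne_zero_iff.mp hl
      have hzl := ih l hl1
      have k1 := grouplike_key F z₁ h₁ hl2
      have k2 := grouplike_key F z₂ h₂ hl2
      rw [hab, hzl] at k1
      exact mul_right_cancel₀ (mul_ne_zero (hdC a) (hdC l)) (k1.trans k2.symm)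
  funext k
  obtain ⟨n, hn⟩ := hgen k
  exact key n k hn

lemma dchar_grouplike {m : ℕ} (F : FusionData m) :
    IsGroupLike F (fun i => (F.d i : ℂ)) := by
  refine ⟨⟨?_, ?_, ?_, ?_⟩, ?_⟩
  · show ((F.d 0 : ℝ) : ℂ) = 1
    rw [F.d_one]; exact Complex.ofReal_one
  · intro i j
    have := F.d_mul i j
    push_cast
    exact_mod_cast congrArg (Complex.ofReal) this
  · intro i
    simp [F.d_dual, Complex.conj_ofReal]
  · intro i
    simp [Complex.norm_real, abs_of_pos (F.d_pos i)]
  · intro i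
    simp only [starProd, Complex.conj_ofReal]
    rw [div_eq_iff (Complex.ofReal_ne_zero.mpr (F.d_pos i).ne')]

/-- If the fusion ring is generated by a simple basis element `x_a`, the
action of the group of group-like characters by `⋆` is free on non-vanishing
characters (those with `μ(x) ≠ 0`); in particular `z ↦ z ⋆ μ` is injective on
group-likes, so each non-vanishing orbit has cardinality `|G|`. -/
theorem free_action_on_nonvanishing {m : ℕ} (F : FusionData m)
    (a : Fin (m + 1)) (hgen : ∀ k, ∃ n, powCoeff F a n k ≠ 0)
    (μ : Fin (m + 1) → ℂ) (hμ : IsChar F μ) (hnv : μ a ≠ 0) :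
    (∀ z, IsGroupLike F z → starProd F z μ = μ → z = fun i => (F.d i : ℂ)) ∧
    (∀ z₁ z₂, IsGroupLike F z₁ → IsGroupLike F z₂ →
      starProd F z₁ μ = starProd F z₂ μ → z₁ = z₂) := by
  have hdC : ∀ t, (F.d t : ℂ) ≠ 0 := fun t => Complex.ofReal_ne_zero.mpr (F.d_pos t).ne'
  constructor
  · intro z hz hfix
    have ha : z a = (F.d a : ℂ) := by
      have := congrFun hfix a
      simp only [starProd] at this
      rw [div_eq_iff (hdC a)] at this
      have h' : z a * μ a = (F.d a : ℂ) * μ a := by linear_combination this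
      exact mul_right_cancel₀ hnv h'
    exact grouplike_propagate F a hgen z _ hz (dchar_grouplike F) ha
  · intro z₁ z₂ h₁ h₂ heq
    have ha : z₁ a = z₂ a := by
      have := congrFun heq a
      simp only [starProd, div_eq_div_iff (hdC a) (hdC a)] at this
      have h' : z₁ a * μ a = z₂ a * μ a := mul_right_cancel₀ (hdC a) this
      exact mul_right_cancel₀ hnv h'
    exact grouplike_propagate F a hgen z₁ z₂ h₁ h₂ ha
end

section
/- Let C be a spherical fusion category with commutative Grothendieck ring generated by a simple object X, and let s ≥ 1/2 be rational. Suppose C is s-Isaacs: λ_s(μ_j, X) := (dim C)^s (dim C^j)^{1-s} μ_j([X])/dim(X) is an algebraic integer for all characters μ_j. Then (dim C)^{2s+1}/(|U(C)| · dim(X)²) is an algebraic integer. -/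
open scoped BigOperators

namespace IsaacsAux

open Finset Complex

variable {m : ℕ} (F : FusionData m)

lemma pair' (t l : Fin (m + 1)) : F.N t l 0 = if t = F.dual l then 1 else 0 := by
  rw [F.N_pair]
  rcases eq_or_ne t (F.dual l) with ht | ht
  · subst ht; simp [F.dual_invol]
  · rw [if_neg ht, if_neg]
    intro h'; exact ht (by rw [h', F.dual_invol])

/-- Frobenius reciprocity. -/
lemma frob (i j l : Fin (m + 1)) : F.N i j (F.dual l) = F.N j l (F.dual i) := by
  have h := F.N_assoc i j l 0
  have hL : ∑ t, F.N i j t * F.N t l 0 = F.N i j (F.dual l) := by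
    rw [Finset.sum_eq_single_of_mem (F.dual l) (Finset.mem_univ _)
      (fun b _ hb => by rw [pair' F, if_neg hb, mul_zero])]
    rw [pair' F, if_pos rfl, mul_one]
  have hR : ∑ t, F.N j l t * F.N i t 0 = F.N j l (F.dual i) := by
    rw [Finset.sum_eq_single_of_mem (F.dual i) (Finset.mem_univ _)
      (fun b _ hb => by rw [F.N_pair, if_neg hb, mul_zero])]
    rw [F.N_pair, if_pos rfl, mul_one]
  rw [hL, hR] at h
  exact h

lemma frob' (b i t : Fin (m + 1)) : F.N b (F.dual i) t = F.N b (F.dual t) i := by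
  have h1 : F.N b (F.dual i) t = F.N (F.dual i) (F.dual t) (F.dual b) := by
    conv_lhs => rw [← F.dual_invol t]
    rw [frob]
  have h2 : F.N b (F.dual t) i = F.N (F.dual t) (F.dual i) (F.dual b) := by
    conv_lhs => rw [← F.dual_invol i]
    rw [frob]
  rw [h1, h2, F.N_comm]

variable {F}

lemma IsChar.conj' {ν : Fin (m+1) → ℂ} (h : IsChar F ν) :
    IsChar F (fun i => starRingEnd ℂ (ν i)) := by
  obtain ⟨h0, hm, hd, hb⟩ := h
  refine ⟨by simp [h0], fun i j => ?_, fun i => ?_, fun i => by simpa using hb i⟩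
  · show (starRingEnd ℂ) (ν i) * (starRingEnd ℂ) (ν j) = _
    rw [← map_mul, hm, map_sum]
    exact Finset.sum_congr rfl fun k _ => by simp
  · simpa using congrArg (starRingEnd ℂ) (hd i)

lemma char_mul_sum {ν χ : Fin (m+1) → ℂ} (hν : IsChar F ν) (hχ : IsChar F χ) (b : Fin (m+1)) :
    χ b * (∑ i, starRingEnd ℂ (ν i) * χ i) = ν b * (∑ i, starRingEnd ℂ (ν i) * χ i) := by
  have hinvol : Function.Involutive F.dual := F.dual_invol
  have key : ∀ t, (∑ i, (F.N b i t : ℂ) * starRingEnd ℂ (ν i)) = ν b * starRingEnd ℂ (ν t) := by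
    intro t
    have e1 : ∑ i, (F.N b (F.dual i) t : ℂ) * ν i
        = ∑ i, (F.N b i t : ℂ) * starRingEnd ℂ (ν i) :=
      Fintype.sum_bijective F.dual hinvol.bijective _ _ (fun i => by
        rw [hν.2.2.1 i, Complex.conj_conj])
    rw [← e1]
    have e2 : ∑ i, (F.N b (F.dual i) t : ℂ) * ν i = ∑ i, (F.N b (F.dual t) i : ℂ) * ν i :=
      Finset.sum_congr rfl fun i _ => by rw [frob' F]
    rw [e2, ← hν.2.1 b (F.dual t), hν.2.2.1 t]
  calc χ b * ∑ i, starRingEnd ℂ (ν i) * χ i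
      = ∑ i, starRingEnd ℂ (ν i) * (χ b * χ i) := by
        rw [Finset.mul_sum]; exact Finset.sum_congr rfl fun i _ => by ring
    _ = ∑ i, starRingEnd ℂ (ν i) * ∑ t, (F.N b i t : ℂ) * χ t :=
        Finset.sum_congr rfl fun i _ => by rw [hχ.2.1]
    _ = ∑ i, ∑ t, (F.N b i t : ℂ) * starRingEnd ℂ (ν i) * χ t :=
        Finset.sum_congr rfl fun i _ => by
          rw [Finset.mul_sum]; exact Finset.sum_congr rfl fun t _ => by ring
    _ = ∑ t, (∑ i, (F.N b i t : ℂ) * starRingEnd ℂ (ν i)) * χ t := by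
        rw [Finset.sum_comm]
        exact Finset.sum_congr rfl fun t _ => by rw [Finset.sum_mul]
    _ = ∑ t, ν b * (starRingEnd ℂ (ν t) * χ t) :=
        Finset.sum_congr rfl fun t _ => by rw [key t]; ring
    _ = ν b * ∑ i, starRingEnd ℂ (ν i) * χ i := by rw [← Finset.mul_sum]

lemma orth1 {ν χ : Fin (m+1) → ℂ} (hν : IsChar F ν) (hχ : IsChar F χ) (hne : ν ≠ χ) :
    ∑ i, starRingEnd ℂ (ν i) * χ i = 0 := by
  obtain ⟨b, hb⟩ := Function.ne_iff.mp hne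
  by_contra hS
  exact hb (mul_right_cancel₀ hS (char_mul_sum hν hχ b)).symm

lemma nq_pos {ν : Fin (m+1) → ℂ} (h : IsChar F ν) : 0 < ∑ i, Complex.normSq (ν i) :=
  Finset.sum_pos' (fun i _ => Complex.normSq_nonneg _)
    ⟨0, Finset.mem_univ 0, by rw [h.1]; norm_num⟩

lemma orth2 {μ : Fin (m+1) → Fin (m+1) → ℂ} (hchar : ∀ j, IsChar F (μ j))
    (hinj : Function.Injective μ) (a : Fin (m+1)) :
    ∑ j, Complex.normSq (μ j a) / (∑ i, Complex.normSq (μ j i)) = 1 := by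
  classical
  set n : Fin (m+1) → ℝ := fun j => ∑ i, Complex.normSq (μ j i) with hn
  have hnpos : ∀ j, 0 < n j := fun j => nq_pos (hchar j)
  set c : Fin (m+1) → ℂ := fun j => ((Real.sqrt (n j) : ℝ) : ℂ) with hc
  have hcsq : ∀ j, c j * c j = ((n j : ℝ) : ℂ) := by
    intro j
    have hcj : c j = ((Real.sqrt (n j) : ℝ) : ℂ) := rfl
    rw [hcj]
    norm_cast
    exact Real.mul_self_sqrt (hnpos j).le
  have hc0 : ∀ j, c j ≠ 0 := by
    intro j h
    have := hcsq j
    rw [h, mul_zero] at this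
    exact (hnpos j).ne' (by exact_mod_cast this.symm)
  set U : Matrix (Fin (m+1)) (Fin (m+1)) ℂ := fun j i => μ j i / c j with hU
  have hterm : ∀ j k i, U j i * star (U k i)
      = μ j i * starRingEnd ℂ (μ k i) / (c j * c k) := by
    intro j k i
    rw [hU]
    simp only [star_div₀]
    rw [show star (c k) = c k from Complex.conj_ofReal _]
    rw [div_mul_div_comm]
    rfl
  have hUU : U * U.conjTranspose = 1 := by
    ext j k
    rw [Matrix.mul_apply, Matrix.one_apply]
    simp only [Matrix.conjTranspose_apply]
    rcases eq_or_ne j k with rfl | hjk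
    · rw [if_pos rfl]
      have : ∀ i, U j i * star (U j i) = ((Complex.normSq (μ j i) : ℝ) : ℂ) / ((n j : ℝ) : ℂ) := by
        intro i
        rw [hterm j j i, Complex.mul_conj, hcsq j]
      rw [Finset.sum_congr rfl fun i _ => this i, ← Finset.sum_div, ← Complex.ofReal_sum]
      show ((n j : ℝ) : ℂ) / _ = 1
      rw [div_self]
      exact_mod_cast (hnpos j).ne'
    · rw [if_neg hjk]
      have horth : ∑ i, starRingEnd ℂ (μ k i) * μ j i = 0 :=
        orth1 (hchar k) (hchar j) (fun h => hjk (hinj h).symm)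
      calc ∑ i, U j i * star (U k i)
          = ∑ i, μ j i * starRingEnd ℂ (μ k i) / (c j * c k) :=
            Finset.sum_congr rfl fun i _ => hterm j k i
        _ = (∑ i, starRingEnd ℂ (μ k i) * μ j i) / (c j * c k) := by
            rw [← Finset.sum_div]
            exact congrArg (· / (c j * c k)) (Finset.sum_congr rfl fun i _ => by ring)
        _ = 0 := by rw [horth, zero_div]
  have h2 : U.conjTranspose * U = 1 := mul_eq_one_comm.mp hUU
  have h3 : (U.conjTranspose * U) a a = 1 := by rw [h2, Matrix.one_apply_eq]
  rw [Matrix.mul_apply] at h3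
  have h4 : ∀ j, U.conjTranspose a j * U j a
      = ((Complex.normSq (μ j a) / n j : ℝ) : ℂ) := by
    intro j
    rw [Matrix.conjTranspose_apply, mul_comm, hterm j j a, Complex.mul_conj, hcsq j]
    push_cast
    ring
  rw [Finset.sum_congr rfl fun j _ => h4 j, ← Complex.ofReal_sum] at h3
  exact_mod_cast h3

lemma abs_eq_of_grouplike {g : Fin (m+1) → ℂ} (hg : IsGroupLike F g) (i : Fin (m+1)) :
    ‖g i‖ = F.d i := by
  have h := hg.2 i
  simp only [starProd] at h
  rw [Complex.mul_conj] at h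
  have hd : ((F.d i : ℝ) : ℂ) ≠ 0 := Complex.ofReal_ne_zero.mpr (F.d_pos i).ne'
  have h2 : ((Complex.normSq (g i) : ℝ) : ℂ) = ((F.d i * F.d i : ℝ) : ℂ) := by
    rw [div_eq_iff hd] at h
    push_cast
    exact h
  have h3 : Complex.normSq (g i) = F.d i * F.d i := by exact_mod_cast h2
  rw [Complex.norm_def, h3, Real.sqrt_mul_self (F.d_pos i).le]

lemma grouplike_of_abs {g : Fin (m+1) → ℂ} (hg : IsChar F g)
    (h : ∀ i, ‖g i‖ = F.d i) : IsGroupLike F g := by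
  refine ⟨hg, fun i => ?_⟩
  show g i * starRingEnd ℂ (g i) / _ = _
  rw [Complex.mul_conj]
  have h3 : Complex.normSq (g i) = F.d i * F.d i := by
    rw [← Complex.sq_norm, h i]; ring
  rw [h3]
  have hd : ((F.d i : ℝ) : ℂ) ≠ 0 := Complex.ofReal_ne_zero.mpr (F.d_pos i).ne'
  push_cast
  field_simp

lemma grouplike_ratio {g : Fin (m+1) → ℂ} (hg : IsGroupLike F g) {i j k : Fin (m+1)}
    (hN : F.N i j k ≠ 0) :
    g k * (((F.d i : ℝ) : ℂ) * ((F.d j : ℝ) : ℂ)) = g i * g j * ((F.d k : ℝ) : ℂ) := by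
  have habs : ∀ l, ‖g l‖ = F.d l := abs_eq_of_grouplike hg
  have hdi : ((F.d i : ℝ) : ℂ) ≠ 0 := Complex.ofReal_ne_zero.mpr (F.d_pos i).ne'
  have hdj : ((F.d j : ℝ) : ℂ) ≠ 0 := Complex.ofReal_ne_zero.mpr (F.d_pos j).ne'
  set u : ℂ := g i * g j / (((F.d i : ℝ) : ℂ) * ((F.d j : ℝ) : ℂ)) with hu_def
  have hu : ‖u‖ = 1 := by
    rw [hu_def, norm_div, norm_mul, habs, habs, norm_mul, Complex.norm_real, Real.norm_eq_abs,
      Complex.norm_real, Real.norm_eq_abs, abs_of_pos (F.d_pos i), abs_of_pos (F.d_pos j), div_self]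
    exact mul_ne_zero (F.d_pos i).ne' (F.d_pos j).ne'
  have hgij : g i * g j = u * (((F.d i : ℝ) : ℂ) * ((F.d j : ℝ) : ℂ)) := by
    rw [hu_def]
    field_simp
  have hcu : starRingEnd ℂ u * u = 1 := by
    rw [mul_comm, Complex.mul_conj]
    have : Complex.normSq u = 1 := by rw [← Complex.sq_norm, hu]; norm_num
    rw [this]
    norm_num
  have hsum : ∑ l, (F.N i j l : ℝ) * (F.d l - (starRingEnd ℂ u * g l).re) = 0 := by
    have h1 : ∑ l, (F.N i j l : ℝ) * F.d l = F.d i * F.d j := (F.d_mul i j).symm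
    have h2 : ∑ l, (F.N i j l : ℝ) * (starRingEnd ℂ u * g l).re = F.d i * F.d j := by
      have e1 : ∑ l, (F.N i j l : ℝ) * (starRingEnd ℂ u * g l).re
          = (starRingEnd ℂ u * ∑ l, (F.N i j l : ℂ) * g l).re := by
        rw [Finset.mul_sum, Complex.re_sum]
        refine Finset.sum_congr rfl fun l _ => ?_
        rw [show starRingEnd ℂ u * ((F.N i j l : ℂ) * g l)
            = ((F.N i j l : ℝ) : ℂ) * (starRingEnd ℂ u * g l) by push_cast; ring]
        simp [Complex.mul_re]
      rw [e1, ← hg.1.2.1 i j, hgij, ← mul_assoc, hcu, one_mul]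
      simp
    have e0 : ∑ l, (F.N i j l : ℝ) * (F.d l - (starRingEnd ℂ u * g l).re)
        = (∑ l, (F.N i j l : ℝ) * F.d l) - ∑ l, (F.N i j l : ℝ) * (starRingEnd ℂ u * g l).re := by
      rw [← Finset.sum_sub_distrib]
      exact Finset.sum_congr rfl fun l _ => by ring
    rw [e0, h1, h2, sub_self]
  have hterm : ∀ l ∈ Finset.univ, 0 ≤ (F.N i j l : ℝ) * (F.d l - (starRingEnd ℂ u * g l).re) := by
    intro l _
    apply mul_nonneg (Nat.cast_nonneg _)
    have h5 : (starRingEnd ℂ u * g l).re ≤ ‖starRingEnd ℂ u * g l‖ :=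
      Complex.re_le_norm _
    rw [norm_mul, Complex.norm_conj, hu, one_mul, habs] at h5
    linarith
  have hz := (Finset.sum_eq_zero_iff_of_nonneg hterm).mp hsum k (Finset.mem_univ k)
  have hre : (starRingEnd ℂ u * g k).re = F.d k := by
    rcases mul_eq_zero.mp hz with h | h
    · exact absurd (by exact_mod_cast h) hN
    · linarith
  have habsw : ‖starRingEnd ℂ u * g k‖ = F.d k := by
    rw [norm_mul, Complex.norm_conj, hu, one_mul, habs]
  have him : (starRingEnd ℂ u * g k).im = 0 := by
    have ha : Complex.normSq (starRingEnd ℂ u * g k)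
        = (starRingEnd ℂ u * g k).re * (starRingEnd ℂ u * g k).re
          + (starRingEnd ℂ u * g k).im * (starRingEnd ℂ u * g k).im := Complex.normSq_apply _
    have hb : Complex.normSq (starRingEnd ℂ u * g k) = F.d k * F.d k := by
      rw [← Complex.sq_norm, habsw]; ring
    have h7 : (starRingEnd ℂ u * g k).im * (starRingEnd ℂ u * g k).im = 0 := by
      rw [hre] at ha
      linarith [ha, hb]
    exact mul_self_eq_zero.mp h7
  have hw : starRingEnd ℂ u * g k = ((F.d k : ℝ) : ℂ) := by
    apply Complex.ext
    · rw [hre, Complex.ofReal_re]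
    · rw [him, Complex.ofReal_im]
  have hgk : g k = u * ((F.d k : ℝ) : ℂ) := by
    calc g k = (u * starRingEnd ℂ u) * g k := by rw [mul_comm u, hcu, one_mul]
      _ = u * (starRingEnd ℂ u * g k) := by ring
      _ = u * ((F.d k : ℝ) : ℂ) := by rw [hw]
  rw [hgk, hgij]
  ring

lemma dC_ne {i : Fin (m+1)} : ((F.d i : ℝ) : ℂ) ≠ 0 :=
  Complex.ofReal_ne_zero.mpr (F.d_pos i).ne'

lemma star_char {g ν : Fin (m+1) → ℂ} (hg : IsGroupLike F g) (hν : IsChar F ν) :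
    IsChar F (starProd F g ν) := by
  have habs : ∀ l, ‖g l‖ = F.d l := abs_eq_of_grouplike hg
  have hgr : ∀ {i j k : Fin (m+1)}, F.N i j k ≠ 0 →
      g k * (((F.d i : ℝ) : ℂ) * ((F.d j : ℝ) : ℂ)) = g i * g j * ((F.d k : ℝ) : ℂ) :=
    fun h => grouplike_ratio hg h
  obtain ⟨⟨hg0, hgm, hgd, hgb⟩, _⟩ := hg
  obtain ⟨hν0, hνm, hνd, hνb⟩ := hν
  refine ⟨?_, fun i j => ?_, fun i => ?_, fun i => ?_⟩
  · show g 0 * ν 0 / _ = 1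
    rw [hg0, hν0, F.d_one]
    norm_num
  · show g i * ν i / _ * (g j * ν j / _) = _
    have e1 : ∀ k, (F.N i j k : ℂ) * starProd F g ν k
        = g i * g j / (((F.d i : ℝ):ℂ) * ((F.d j : ℝ):ℂ)) * ((F.N i j k : ℂ) * ν k) := by
      intro k
      rcases eq_or_ne (F.N i j k) 0 with h | h
      · rw [h]; push_cast; ring
      · have hr := hgr h
        have hdi : ((F.d i : ℝ):ℂ) ≠ 0 := dC_ne
        have hdj : ((F.d j : ℝ):ℂ) ≠ 0 := dC_ne
        have hdk : ((F.d k : ℝ):ℂ) ≠ 0 := dC_ne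
        show (F.N i j k : ℂ) * (g k * ν k / _) = _
        field_simp
        linear_combination (ν k) * hr
    rw [Finset.sum_congr rfl fun k _ => e1 k, ← Finset.mul_sum, ← hνm i j,
      div_mul_div_comm, div_mul_eq_mul_div]
    congr 1
    ring
  · show g (F.dual i) * ν (F.dual i) / _ = _
    rw [hgd, hνd, F.d_dual]
    show _ = starRingEnd ℂ (g i * ν i / _)
    rw [map_div₀, map_mul, Complex.conj_ofReal]
  · show ‖g i * ν i / _‖ ≤ _
    rw [norm_div, norm_mul, habs, Complex.norm_real, Real.norm_eq_abs, abs_of_pos (F.d_pos i),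
      mul_comm, mul_div_assoc, div_self (F.d_pos i).ne', mul_one]
    exact hνb i

lemma star_normSq {g : Fin (m+1) → ℂ} (hg : IsGroupLike F g) (ν : Fin (m+1) → ℂ)
    (i : Fin (m+1)) : Complex.normSq (starProd F g ν i) = Complex.normSq (ν i) := by
  have habs : ‖g i‖ = F.d i := abs_eq_of_grouplike hg i
  show Complex.normSq (g i * ν i / _) = _
  rw [Complex.normSq_div, Complex.normSq_mul, ← Complex.sq_norm (g i), habs,
    Complex.normSq_ofReal]
  rw [mul_comm, mul_div_assoc, show F.d i ^ 2 = F.d i * F.d i from by ring,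
    div_self (mul_ne_zero (F.d_pos i).ne' (F.d_pos i).ne'), mul_one]

lemma star_grouplike {g h : Fin (m+1) → ℂ} (hg : IsGroupLike F g) (hh : IsGroupLike F h) :
    IsGroupLike F (starProd F g h) := by
  refine grouplike_of_abs (star_char hg hh.1) (fun i => ?_)
  show ‖g i * h i / _‖ = _
  rw [norm_div, norm_mul, abs_eq_of_grouplike hg, abs_eq_of_grouplike hh,
    Complex.norm_real, Real.norm_eq_abs, abs_of_pos (F.d_pos i), mul_div_assoc, div_self (F.d_pos i).ne',
    mul_one]

lemma conj_grouplike {g : Fin (m+1) → ℂ} (hg : IsGroupLike F g) :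
    IsGroupLike F (fun i => starRingEnd ℂ (g i)) :=
  grouplike_of_abs (IsChar.conj' hg.1) (fun i => by
    rw [Complex.norm_conj]; exact abs_eq_of_grouplike hg i)

lemma star_id (ν : Fin (m+1) → ℂ) (i : Fin (m+1)) :
    starProd F (fun k => ((F.d k : ℝ) : ℂ)) ν i = ν i := by
  show ((F.d i : ℝ):ℂ) * ν i / _ = _
  rw [mul_comm, mul_div_assoc, div_self (dC_ne), mul_one]

lemma star_conj_cancel {g : Fin (m+1) → ℂ} (hg : IsGroupLike F g) (ν : Fin (m+1) → ℂ)
    (i : Fin (m+1)) :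
    starProd F (fun k => starRingEnd ℂ (g k)) (starProd F g ν) i = ν i := by
  show starRingEnd ℂ (g i) * (g i * ν i / _) / _ = _
  have hn : Complex.normSq (g i) = F.d i * F.d i := by
    rw [← Complex.sq_norm, abs_eq_of_grouplike hg i]; ring
  have hd : ((F.d i : ℝ):ℂ) ≠ 0 := dC_ne
  have : starRingEnd ℂ (g i) * (g i * ν i / ((F.d i:ℝ):ℂ)) / ((F.d i:ℝ):ℂ)
      = (starRingEnd ℂ (g i) * g i) * ν i / (((F.d i:ℝ):ℂ) * ((F.d i:ℝ):ℂ)) := by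
    field_simp
  rw [this, mul_comm (starRingEnd ℂ (g i)), Complex.mul_conj, hn]
  push_cast
  field_simp

lemma star_assoc (g h ν : Fin (m+1) → ℂ) (i : Fin (m+1)) :
    starProd F g (starProd F h ν) i = starProd F (starProd F g h) ν i := by
  have hd : ((F.d i : ℝ):ℂ) ≠ 0 := dC_ne
  show g i * (h i * ν i / _) / _ = g i * h i / _ * ν i / _
  field_simp

lemma grouplike_pow {g : Fin (m+1) → ℂ} (hg : IsGroupLike F g) (a : Fin (m+1)) :
    ∀ n k, powCoeff F a n k ≠ 0 → g k * ((F.d a : ℝ) : ℂ) ^ n = g a ^ n * ((F.d k : ℝ) : ℂ) := by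
  intro n
  induction n with
  | zero =>
    intro k hk
    have hk0 : k = 0 := by
      by_contra h
      simp [powCoeff, h] at hk
    subst hk0
    simp [hg.1.1, F.d_one]
  | succ n ih =>
    intro k hk
    have hex : ∃ l, powCoeff F a n l * F.N a l k ≠ 0 := by
      by_contra h
      push_neg at h
      exact hk (by
        rw [show powCoeff F a (n+1) k = ∑ l, powCoeff F a n l * F.N a l k from rfl]
        exact Finset.sum_eq_zero fun l _ => h l)
    obtain ⟨l, hl⟩ := hex
    have hl1 : powCoeff F a n l ≠ 0 := fun h => hl (by rw [h, zero_mul])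
    have hl2 : F.N a l k ≠ 0 := fun h => hl (by rw [h, mul_zero])
    have h1 := ih l hl1
    have h2 := grouplike_ratio hg hl2
    have hdl : ((F.d l : ℝ) : ℂ) ≠ 0 := dC_ne
    apply mul_right_cancel₀ hdl
    calc g k * ((F.d a:ℝ):ℂ) ^ (n+1) * ((F.d l:ℝ):ℂ)
        = g k * (((F.d a:ℝ):ℂ) * ((F.d l:ℝ):ℂ)) * ((F.d a:ℝ):ℂ) ^ n := by ring
      _ = g a * g l * ((F.d k:ℝ):ℂ) * ((F.d a:ℝ):ℂ) ^ n := by rw [h2]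
      _ = g a * ((F.d k:ℝ):ℂ) * (g l * ((F.d a:ℝ):ℂ) ^ n) := by ring
      _ = g a * ((F.d k:ℝ):ℂ) * (g a ^ n * ((F.d l:ℝ):ℂ)) := by rw [h1]
      _ = g a ^ (n+1) * ((F.d k:ℝ):ℂ) * ((F.d l:ℝ):ℂ) := by ring

lemma free_aux {g h ν : Fin (m+1) → ℂ} (hg : IsGroupLike F g) (hh : IsGroupLike F h)
    {a : Fin (m+1)} (hgen : ∀ k, ∃ n, powCoeff F a n k ≠ 0) (hνa : ν a ≠ 0)
    (he : ∀ i, starProd F g ν i = starProd F h ν i) : g = h := by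
  have ha : g a = h a := by
    have h1 := he a
    simp only [starProd] at h1
    rw [div_eq_div_iff (dC_ne) (dC_ne)] at h1
    have h2 : g a * ν a = h a * ν a := mul_right_cancel₀ (dC_ne (F := F) (i := a)) h1
    exact mul_right_cancel₀ hνa h2
  funext k
  obtain ⟨n, hn⟩ := hgen k
  have e1 := grouplike_pow hg a n k hn
  have e2 := grouplike_pow hh a n k hn
  rw [ha] at e1
  have := e1.trans e2.symm
  exact mul_right_cancel₀ (pow_ne_zero n (dC_ne (F := F) (i := a))) this

end IsaacsAux

open IsaacsAux


/-- A spherical fusion category with commutative Grothendieck ring generated by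
a simple object `X = x_a`, with (real) quantum dimensions `dims`, which is
`s`-Isaacs for a rational `s ≥ 1/2`: every
`λ_s(μ_j, X) = (dim C)^s (dim C^j)^{1-s} μ_j([X])/dim X` is an algebraic
integer (and the algebraic integers `dim C^j = dim C/n_j` have
`(dim C^j)^{2s-1}` an algebraic integer).  Then
`(dim C)^{2s+1}/(|U(C)|·dim(X)²)` is an algebraic integer. -/
theorem isaacs_s_divisibility {m : ℕ} (F : FusionData m)
    (a : Fin (m + 1)) (hgen : ∀ k, ∃ n, powCoeff F a n k ≠ 0)
    (μ : Fin (m + 1) → Fin (m + 1) → ℂ)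
    (hchar : ∀ j, IsChar F (μ j)) (hinj : Function.Injective μ)
    (hall : ∀ ν, IsChar F ν → ∃ j, μ j = ν)
    (h0 : μ 0 = fun i => (F.d i : ℂ))
    (dims : Fin (m + 1) → ℝ) (hd0 : dims 0 = 1)
    (hdmul : ∀ i j, dims i * dims j = ∑ k, (F.N i j k : ℝ) * dims k)
    (hddual : ∀ i, dims (F.dual i) = dims i) (hda : dims a ≠ 0)
    (hdimpos : 0 < ∑ i, dims i ^ 2)
    (s : ℚ) (hs : (1 : ℚ) / 2 ≤ s)
    (hIsaacs : ∀ j, IsIntegral ℤ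
      ((((∑ i, dims i ^ 2) ^ (s : ℝ) *
          ((∑ i, dims i ^ 2) / (∑ i, Complex.normSq (μ j i))) ^ ((1 : ℝ) - (s : ℝ)) : ℝ) : ℂ) *
        μ j a / (dims a : ℂ)))
    (hCj : ∀ j, IsIntegral ℤ
      ((((∑ i, dims i ^ 2) / (∑ i, Complex.normSq (μ j i))) ^ (2 * (s : ℝ) - 1) : ℝ))) :
    IsIntegral ℤ (((∑ i, dims i ^ 2) ^ (2 * (s : ℝ) + 1) /
      ((Nat.card {j : Fin (m + 1) // IsGroupLike F (μ j)} : ℝ) * dims a ^ 2) : ℝ)) := by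
  classical
  set D : ℝ := ∑ i, dims i ^ 2 with hD_def
  set n : Fin (m+1) → ℝ := fun j => ∑ i, Complex.normSq (μ j i) with hn_def
  have hnpos : ∀ j, 0 < n j := fun j => nq_pos (hchar j)
  set t : Fin (m+1) → ℝ :=
    fun j => D ^ (2*(s:ℝ)) * (D / n j) * Complex.normSq (μ j a) / dims a ^ 2 with ht_def
  have hreal : ∀ x : ℝ, IsIntegral ℤ ((x : ℂ)) → IsIntegral ℤ x := fun x h =>
    (isIntegral_algHom_iff ((algebraMap ℝ ℂ).toIntAlgHom) Complex.ofReal_injective).mp h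
  have hup : ∀ x : ℝ, IsIntegral ℤ x → IsIntegral ℤ ((x : ℂ)) := fun x h =>
    h.map ((algebraMap ℝ ℂ).toIntAlgHom)
  -- integrality of each summand
  have htint : ∀ j, IsIntegral ℤ (t j) := by
    intro j
    obtain ⟨j', hj'⟩ := hall (fun i => starRingEnd ℂ (μ j i)) (IsChar.conj' (hchar j))
    have hnj' : n j' = n j := by
      simp only [hn_def, hj']
      exact Finset.sum_congr rfl fun i _ => Complex.normSq_conj _
    have hdn : 0 < D / n j := div_pos hdimpos (hnpos j)
    have hAAB : (D ^ (s:ℝ) * (D/n j) ^ ((1:ℝ)-(s:ℝ))) * (D ^ (s:ℝ) * (D/n j) ^ ((1:ℝ)-(s:ℝ)))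
        * (D/n j) ^ (2*(s:ℝ)-1) = D ^ (2*(s:ℝ)) * (D / n j) := by
      rw [show (D ^ (s:ℝ) * (D/n j) ^ ((1:ℝ)-(s:ℝ))) * (D ^ (s:ℝ) * (D/n j) ^ ((1:ℝ)-(s:ℝ)))
          * (D/n j) ^ (2*(s:ℝ)-1)
          = (D ^ (s:ℝ) * D ^ (s:ℝ)) * ((D/n j) ^ ((1:ℝ)-(s:ℝ)) * (D/n j) ^ ((1:ℝ)-(s:ℝ))
            * (D/n j) ^ (2*(s:ℝ)-1)) from by ring]
      rw [← Real.rpow_add hdimpos, ← Real.rpow_add hdn, ← Real.rpow_add hdn]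
      rw [show (s:ℝ) + (s:ℝ) = 2*(s:ℝ) from by ring,
        show ((1:ℝ)-(s:ℝ)) + ((1:ℝ)-(s:ℝ)) + (2*(s:ℝ)-1) = 1 from by ring, Real.rpow_one]
    have key : ((t j : ℝ) : ℂ) =
        (((D ^ (s:ℝ) * (D / n j) ^ ((1:ℝ)-(s:ℝ)) : ℝ) : ℂ) * μ j a / ((dims a : ℝ) : ℂ)) *
        (((D ^ (s:ℝ) * (D / n j') ^ ((1:ℝ)-(s:ℝ)) : ℝ) : ℂ) * μ j' a / ((dims a : ℝ) : ℂ)) *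
        (((D / n j) ^ (2*(s:ℝ)-1) : ℝ) : ℂ) := by
      rw [hnj', show μ j' a = starRingEnd ℂ (μ j a) from by rw [hj']]
      set A : ℝ := D ^ (s:ℝ) * (D / n j) ^ ((1:ℝ)-(s:ℝ)) with hA_def
      set B : ℝ := (D / n j) ^ (2*(s:ℝ)-1) with hB_def
      have hrhs : ((A:ℂ) * μ j a / ((dims a : ℝ):ℂ)) * ((A:ℂ) * starRingEnd ℂ (μ j a) / ((dims a : ℝ):ℂ)) * (B:ℂ)
          = ((A*A*B : ℝ) : ℂ) * ((Complex.normSq (μ j a) : ℝ) : ℂ) / (((dims a * dims a : ℝ)) : ℂ) := by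
        rw [show ((A:ℂ) * μ j a / ((dims a : ℝ):ℂ)) * ((A:ℂ) * starRingEnd ℂ (μ j a) / ((dims a : ℝ):ℂ)) * (B:ℂ)
            = (A:ℂ) * (A:ℂ) * (B:ℂ) * (μ j a * starRingEnd ℂ (μ j a)) / (((dims a:ℝ):ℂ) * ((dims a:ℝ):ℂ)) from by ring]
        rw [Complex.mul_conj]
        push_cast
        ring
      rw [hrhs]
      have htj : t j = (A*A*B) * Complex.normSq (μ j a) / (dims a * dims a) := by
        simp only [ht_def]
        rw [hA_def, hB_def, hAAB]
        ring
      rw [htj]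
      push_cast
      ring
    apply hreal
    rw [key]
    exact ((hIsaacs j).mul (hIsaacs j')).mul (hup _ (hCj j))
  -- the total sum
  have horth : ∑ j, Complex.normSq (μ j a) / n j = 1 := by
    simpa only [hn_def] using orth2 hchar hinj a
  have hTsum : ∑ j, t j = D ^ (2*(s:ℝ)+1) / dims a ^ 2 := by
    have hpow : D ^ (2*(s:ℝ)+1) = D ^ (2*(s:ℝ)) * D := by
      rw [Real.rpow_add hdimpos, Real.rpow_one]
    have he : ∀ j, t j = D ^ (2*(s:ℝ)+1) / dims a ^ 2 * (Complex.normSq (μ j a) / n j) := by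
      intro j
      simp only [ht_def]
      rw [hpow]
      have hnj := (hnpos j).ne'
      field_simp
    rw [Finset.sum_congr rfl fun j _ => he j, ← Finset.mul_sum, horth, mul_one]
  -- group-like part
  set P : Fin (m+1) → Prop := fun g => IsGroupLike F (μ g) with hP_def
  set G : Finset (Fin (m+1)) := Finset.univ.filter P with hG_def
  have hP0 : P 0 := by
    show IsGroupLike F (μ 0)
    refine grouplike_of_abs (hchar 0) (fun i => ?_)
    rw [h0]
    exact (Complex.norm_real _).trans ((Real.norm_eq_abs _).trans (abs_of_pos (F.d_pos i)))
  have hG0 : (0 : Fin (m+1)) ∈ G := Finset.mem_filter.mpr ⟨Finset.mem_univ _, hP0⟩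
  have hGcard_pos : 0 < G.card := Finset.card_pos.mpr ⟨0, hG0⟩
  set R : Fin (m+1) → Fin (m+1) → Prop :=
    fun j k => ∃ g, P g ∧ ∀ i, μ k i = starProd F (μ g) (μ j) i with hR_def
  have hRrefl : ∀ j, R j j := fun j =>
    ⟨0, hP0, fun i => by rw [h0]; exact (star_id (μ j) i).symm⟩
  have hRsymm : ∀ {j k}, R j k → R k j := by
    rintro j k ⟨g, hg, he⟩
    obtain ⟨g', hg'⟩ := hall (fun i => starRingEnd ℂ (μ g i)) (IsChar.conj' hg.1)
    have hg'gl : P g' := by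
      show IsGroupLike F (μ g')
      rw [hg']
      exact conj_grouplike hg
    refine ⟨g', hg'gl, fun i => ?_⟩
    have h1 : starProd F (μ g') (μ k) i
        = starProd F (fun l => starRingEnd ℂ (μ g l)) (fun l => starProd F (μ g) (μ j) l) i := by
      simp only [starProd, hg']
      rw [he i]
      rfl
    rw [h1, star_conj_cancel hg (μ j) i]
  have hRtrans : ∀ {j k l}, R j k → R k l → R j l := by
    rintro j k l ⟨g, hg, he⟩ ⟨g2, hg2, he2⟩
    obtain ⟨g3, hg3⟩ := hall (starProd F (μ g2) (μ g)) (star_char hg2 hg.1)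
    have hg3gl : P g3 := by
      show IsGroupLike F (μ g3)
      rw [hg3]
      exact star_grouplike hg2 hg
    refine ⟨g3, hg3gl, fun i => ?_⟩
    rw [he2 i]
    have h4 : starProd F (μ g2) (μ k) i
        = starProd F (μ g2) (fun l => starProd F (μ g) (μ j) l) i := by
      simp only [starProd]
      rw [he i]
      rfl
    rw [h4, star_assoc]
    simp only [starProd, hg3]
  have hnR : ∀ {j k}, R j k → (∀ i, Complex.normSq (μ k i) = Complex.normSq (μ j i)) := by
    rintro j k ⟨g, hg, he⟩ i
    rw [he i]
    exact star_normSq hg (μ j) i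
  have htR : ∀ {j k}, R j k → t k = t j := by
    intro j k h
    have h1 : n k = n j := by
      simp only [hn_def]
      exact Finset.sum_congr rfl fun i _ => hnR h i
    simp only [ht_def]
    rw [h1, hnR h a]
  have hne : ∀ j, (Finset.univ.filter (R j)).Nonempty :=
    fun j => ⟨j, Finset.mem_filter.mpr ⟨Finset.mem_univ _, hRrefl j⟩⟩
  have min'_congr : ∀ (s₁ u : Finset (Fin (m+1))) (hs : s₁.Nonempty) (hu : u.Nonempty),
      s₁ = u → s₁.min' hs = u.min' hu := by rintro s₁ u hs hu rfl; rfl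
  set c : Fin (m+1) → Fin (m+1) := fun j => (Finset.univ.filter (R j)).min' (hne j) with hc_def
  have hcR : ∀ j, R j (c j) :=
    fun j => (Finset.mem_filter.mp ((Finset.univ.filter (R j)).min'_mem (hne j))).2
  have hceq : ∀ {j k}, R j k → c j = c k := by
    intro j k h
    have hset : Finset.univ.filter (R j) = Finset.univ.filter (R k) := by
      ext x
      simp only [Finset.mem_filter, Finset.mem_univ, true_and]
      exact ⟨fun hx => hRtrans (hRsymm h) hx, fun hx => hRtrans h hx⟩
    exact min'_congr _ _ _ _ hset
  set S : Finset (Fin (m+1)) := Finset.univ.filter (fun j => Complex.normSq (μ j a) ≠ 0)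
    with hS_def
  have hSd : ∀ j, j ∉ S → t j = 0 := by
    intro j hj
    have h1 : Complex.normSq (μ j a) = 0 := by
      by_contra h
      exact hj (Finset.mem_filter.mpr ⟨Finset.mem_univ _, h⟩)
    simp only [ht_def]
    rw [h1, mul_zero, zero_div]
  have hcard : ∀ r ∈ S, (Finset.univ.filter (R r)).card = G.card := by
    intro r hr
    have hra : Complex.normSq (μ r a) ≠ 0 := (Finset.mem_filter.mp hr).2
    have hμra : μ r a ≠ 0 := fun h => hra (by rw [h]; simp)
    symm
    apply Finset.card_bij (fun g hg => Classical.choose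
      (hall (starProd F (μ g) (μ r)) (star_char (Finset.mem_filter.mp hg).2 (hchar r))))
    · intro g hg
      have hspec := Classical.choose_spec
        (hall (starProd F (μ g) (μ r)) (star_char (Finset.mem_filter.mp hg).2 (hchar r)))
      exact Finset.mem_filter.mpr ⟨Finset.mem_univ _,
        ⟨g, (Finset.mem_filter.mp hg).2, fun i => by rw [hspec]⟩⟩
    · intro g1 h1 g2 h2 heq
      have hs1 := Classical.choose_spec
        (hall (starProd F (μ g1) (μ r)) (star_char (Finset.mem_filter.mp h1).2 (hchar r)))
      have hs2 := Classical.choose_spec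
        (hall (starProd F (μ g2) (μ r)) (star_char (Finset.mem_filter.mp h2).2 (hchar r)))
      have heq2 : starProd F (μ g1) (μ r) = starProd F (μ g2) (μ r) := by
        rw [← hs1, ← hs2, heq]
      exact hinj (free_aux (Finset.mem_filter.mp h1).2 (Finset.mem_filter.mp h2).2 hgen hμra
        (fun i => congrFun heq2 i))
    · intro k hk
      obtain ⟨g, hg, he⟩ := (Finset.mem_filter.mp hk).2
      have hgG : g ∈ G := Finset.mem_filter.mpr ⟨Finset.mem_univ _, hg⟩
      refine ⟨g, hgG, ?_⟩
      have hspec := Classical.choose_spec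
        (hall (starProd F (μ g) (μ r)) (star_char (Finset.mem_filter.mp hgG).2 (hchar r)))
      apply hinj
      rw [hspec]
      exact (funext he).symm
  have hmaps : ∀ j ∈ S, c j ∈ S.image c := fun j hj => Finset.mem_image_of_mem c hj
  have hfib := Finset.sum_fiberwise_of_maps_to hmaps t
  have hSsum : ∑ j ∈ S, t j = ∑ j, t j :=
    Finset.sum_subset (Finset.subset_univ S) (fun x _ hx => hSd x hx)
  have hinner : ∀ r ∈ S.image c, ∑ j ∈ S.filter (fun j => c j = r), t j = (G.card : ℝ) * t r := by
    intro r hr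
    obtain ⟨j0, hj0S, hj0⟩ := Finset.mem_image.mp hr
    have hRj0r : R j0 r := hj0 ▸ hcR j0
    have hrS : r ∈ S := by
      refine Finset.mem_filter.mpr ⟨Finset.mem_univ _, ?_⟩
      rw [hnR hRj0r a]
      exact (Finset.mem_filter.mp hj0S).2
    have hcr : c r = r := by rw [← hceq hRj0r, hj0]
    have hfilter : S.filter (fun j => c j = r) = Finset.univ.filter (R r) := by
      ext x
      constructor
      · intro hx
        have hx1 := Finset.mem_filter.mp hx
        have hcx : c x = r := hx1.2
        exact Finset.mem_filter.mpr ⟨Finset.mem_univ _, hRsymm (hcx ▸ hcR x)⟩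
      · intro hx
        have hRrx : R r x := (Finset.mem_filter.mp hx).2
        refine Finset.mem_filter.mpr ⟨?_, ?_⟩
        · refine Finset.mem_filter.mpr ⟨Finset.mem_univ _, ?_⟩
          rw [hnR hRrx a]
          exact (Finset.mem_filter.mp hrS).2
        · rw [← hceq hRrx, hcr]
    rw [hfilter]
    rw [Finset.sum_congr rfl (fun j hj => htR (Finset.mem_filter.mp hj).2),
      Finset.sum_const, hcard r hrS, nsmul_eq_mul]
  have hfinal : D ^ (2*(s:ℝ)+1) / dims a ^ 2 = (G.card : ℝ) * ∑ r ∈ S.image c, t r := by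
    rw [← hTsum, ← hSsum, ← hfib, Finset.mul_sum]
    exact Finset.sum_congr rfl hinner
  have hNcard : (Nat.card {j : Fin (m+1) // IsGroupLike F (μ j)} : ℝ) = (G.card : ℝ) := by
    rw [Nat.card_eq_fintype_card, Fintype.card_subtype]
  have hGne : (G.card : ℝ) ≠ 0 := Nat.cast_ne_zero.mpr hGcard_pos.ne'
  rw [hNcard]
  have hrw : D ^ (2*(s:ℝ)+1) / ((G.card : ℝ) * dims a ^ 2) = ∑ r ∈ S.image c, t r := by
    rw [mul_comm (G.card : ℝ) (dims a ^ 2), ← div_div, hfinal,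
      mul_comm (G.card : ℝ) (∑ r ∈ S.image c, t r), mul_div_assoc, div_self hGne, mul_one]
  rw [hrw]
  exact IsIntegral.sum _ (fun r _ => htint r)
end
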